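/- Let A, C be bounded symmetric positive linear operators on a real Hilbert space H (e.g. ℓ²) with γ‖x‖² ≤ ⟨A x, x⟩ ≤ Γ‖x‖² for all x. Suppose u ≠ 0 satisfies A u = λ̲ C u where λ̲ = min_x ⟨A x, x⟩/⟨C x, x⟩ > 0, and suppose there is Λ > λ̲ such that ⟨A x, x⟩/⟨C x, x⟩ ≥ Λ for all x ≠ 0 with ⟨A u, x⟩ = 0. Then the operator M := A − λ̲ C satisfies ⟨M x, x⟩ ≥ ((Λ − λ̲)/Λ)·γ·‖x‖² for all x with ⟨A x, u⟩ = 0, and 0 < ⟨M x, x⟩ ≤ Γ‖x‖² for all x not in the span of u. -/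

import Mathlib

open scoped RealInnerProductSpace

/-- In the generalized eigenproblem setting, `M = A - λ̲ C` satisfies
`⟨M x, x⟩ ≥ ((Λ - λ̲)/Λ)·γ·‖x‖²` for all `x` with `⟨A x, u⟩ = 0`, and
`0 < ⟨M x, x⟩ ≤ Γ‖x‖²` for all `x` not in the span of `u`. -/
theorem stmt2 {H : Type*} [NormedAddCommGroup H] [InnerProductSpace ℝ H] [CompleteSpace H]
    (A C : H →L[ℝ] H)
    (hAsymm : ∀ x y, ⟪A x, y⟫ = ⟪x, A y⟫) (hCsymm : ∀ x y, ⟪C x, y⟫ = ⟪x, C y⟫)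
    (hCpos : ∀ x, x ≠ 0 → 0 < ⟪C x, x⟫)
    (γ Γ : ℝ) (hγ : 0 < γ)
    (hA : ∀ x, γ * ‖x‖ ^ 2 ≤ ⟪A x, x⟫ ∧ ⟪A x, x⟫ ≤ Γ * ‖x‖ ^ 2)
    (lam : ℝ) (hlam : 0 < lam) (u : H) (hu : u ≠ 0) (heig : A u = lam • C u)
    (hmin : ∀ x, x ≠ 0 → lam ≤ ⟪A x, x⟫ / ⟪C x, x⟫)
    (Λ : ℝ) (hΛ : lam < Λ)
    (hgap : ∀ x, x ≠ 0 → ⟪A u, x⟫ = 0 → Λ ≤ ⟪A x, x⟫ / ⟪C x, x⟫) :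
    (∀ x, ⟪A x, u⟫ = 0 → ((Λ - lam) / Λ) * γ * ‖x‖ ^ 2 ≤ ⟪A x - lam • C x, x⟫) ∧
      (∀ x, x ∉ Submodule.span ℝ ({u} : Set H) →
        0 < ⟪A x - lam • C x, x⟫ ∧ ⟪A x - lam • C x, x⟫ ≤ Γ * ‖x‖ ^ 2) := by
  have hΛ0 : 0 < Λ := hlam.trans hΛ
  have hMu : A u - lam • C u = 0 := by rw [heig]; simp
  have hMsymm : ∀ y z : H, ⟪A y - lam • C y, z⟫ = ⟪y, A z - lam • C z⟫ := by
    intro y z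
    simp only [inner_sub_left, inner_sub_right, real_inner_smul_left, real_inner_smul_right,
      hAsymm, hCsymm]
  constructor
  · intro x hx
    by_cases hx0 : x = 0
    · simp [hx0]
    · have hAu : ⟪A u, x⟫ = 0 := by
        rw [hAsymm, real_inner_comm]; exact hx
      have h1 := hgap x hx0 hAu
      have hC := hCpos x hx0
      have h2 : Λ * ⟪C x, x⟫ ≤ ⟪A x, x⟫ := by
        rw [le_div_iff₀ hC] at h1; linarith
      have h3 := (hA x).1
      have h4 : (0:ℝ) ≤ ⟪A x, x⟫ := le_trans (by positivity) h3
      have h5 : lam * ⟪C x, x⟫ ≤ (lam / Λ) * ⟪A x, x⟫ := by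
        rw [div_mul_eq_mul_div, le_div_iff₀ hΛ0]
        calc lam * ⟪C x, x⟫ * Λ = lam * (Λ * ⟪C x, x⟫) := by ring
        _ ≤ lam * ⟪A x, x⟫ := by
            exact mul_le_mul_of_nonneg_left h2 hlam.le
      have h6 : ((Λ - lam) / Λ) * (γ * ‖x‖ ^ 2) ≤ ((Λ - lam) / Λ) * ⟪A x, x⟫ :=
        mul_le_mul_of_nonneg_left h3 (div_nonneg (by linarith) hΛ0.le)
      have h7 : ((Λ - lam) / Λ) * ⟪A x, x⟫ = ⟪A x, x⟫ - (lam / Λ) * ⟪A x, x⟫ := by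
        field_simp
      rw [inner_sub_left, real_inner_smul_left]
      nlinarith [h5, h6, h7]
  · intro x hxspan
    have hx0 : x ≠ 0 := fun h => hxspan (h ▸ Submodule.zero_mem _)
    have hCx := hCpos x hx0
    have hAuu : 0 < ⟪A u, u⟫ := by
      have := (hA u).1
      have h0 : (0:ℝ) < γ * ‖u‖ ^ 2 := mul_pos hγ (pow_pos (norm_pos_iff.mpr hu) 2)
      linarith
    set α := ⟪A u, x⟫ / ⟪A u, u⟫ with hα
    set w := x - α • u with hw
    have hwne : w ≠ 0 := by
      intro h
      apply hxspan
      have hx' : x = α • u := by rwa [sub_eq_zero] at h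
      rw [hx']
      exact Submodule.smul_mem _ _ (Submodule.mem_span_singleton_self u)
    have hAuw : ⟪A u, w⟫ = 0 := by
      rw [hw, inner_sub_right, real_inner_smul_right, hα]
      field_simp; simp
    have hgapw := hgap w hwne hAuw
    have hCw := hCpos w hwne
    have hAwCw : Λ * ⟪C w, w⟫ ≤ ⟪A w, w⟫ := by
      rw [le_div_iff₀ hCw] at hgapw; linarith
    have hMxu : ⟪A x - lam • C x, u⟫ = 0 := by
      rw [hMsymm, hMu]; simp
    have key : ⟪A w - lam • C w, w⟫ = ⟪A x - lam • C x, x⟫ := by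
      have h1 : A w - lam • C w = (A x - lam • C x) - α • (A u - lam • C u) := by
        rw [hw]; simp only [map_sub, map_smul, smul_sub]
        module
      rw [h1, hMu, smul_zero, sub_zero, hw, inner_sub_right, real_inner_smul_right, hMxu,
        mul_zero, sub_zero]
    have hpos : 0 < ⟪A x - lam • C x, x⟫ := by
      rw [← key, inner_sub_left, real_inner_smul_left]
      nlinarith [hAwCw, hCw]
    refine ⟨hpos, ?_⟩
    have := (hA x).2
    rw [inner_sub_left, real_inner_smul_left]
    nlinarith [hCx]
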